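/- Let λ be a partition of n with at least two parts such that the smallest part of λ is at least 2 and the two largest parts are equal (λ_1 = λ_2). Then n(λ) + n(λ') ≤ n(n+1)/4, where n(λ) = Σ_{i≥1} (i−1)λ_i and λ' is the conjugate partition. -/

import Mathlib

/-- The descending list of parts of a partition. -/
def Nat.Partition.descParts {n : ℕ} (P : n.Partition) : List ℕ :=
  (P.parts.sort (· ≤ ·)).reverse

/-- `n(λ) = Σ_{i≥1} (i-1)λ_i` for a partition `λ` listed in decreasing order. -/
def Nat.Partition.nval {n : ℕ} (P : n.Partition) : ℕ :=
  (List.zipWith (· * ·) (List.range P.descParts.length) P.descParts).sum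

/-- `N(n) = Σ_{λ ⊢ n} n(λ)`. -/
def Nfun (n : ℕ) : ℕ := ∑ P : Nat.Partition n, P.nval

/-- `p(n)`, the number of partitions of `n`. -/
def pfun (n : ℕ) : ℕ := Fintype.card (Nat.Partition n)

/-- The list `(λ'_1, λ'_2, …)` of parts of the conjugate partition,
where `λ'_i = #{j : λ_j ≥ i}`. -/
def Nat.Partition.conjParts {n : ℕ} (P : n.Partition) : List ℕ :=
  (List.range P.parts.sup).map (fun i => Multiset.card (P.parts.filter (fun p => i + 1 ≤ p)))

/-- `n(λ') = Σ_i (i-1)λ'_i`. -/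
def Nat.Partition.nvalConj {n : ℕ} (P : n.Partition) : ℕ :=
  (List.zipWith (· * ·) (List.range P.conjParts.length) P.conjParts).sum

private lemma sum_zipWith_succ_mul : ∀ (r T : List ℕ),
    (List.zipWith (fun i t => (i + 1) * t) r T).sum
      = (List.zipWith (· * ·) r T).sum + (T.take r.length).sum
  | [], T => by simp
  | a :: r, [] => by simp
  | a :: r, b :: T => by
    simp only [List.zipWith_cons_cons, List.sum_cons, List.length_cons, List.take_succ_cons,
      sum_zipWith_succ_mul r T]
    ring

private lemma S_cons (a : ℕ) (T : List ℕ) :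
    (List.zipWith (· * ·) (List.range (a :: T).length) (a :: T)).sum
      = T.sum + (List.zipWith (· * ·) (List.range T.length) T).sum := by
  rw [List.length_cons, List.range_succ_eq_map]
  rw [List.zipWith_cons_cons, List.zipWith_map_left]
  simp only [List.sum_cons, Nat.zero_mul, Nat.zero_add]
  have : (List.zipWith (fun a_1 b => Nat.succ a_1 * b) (List.range T.length) T).sum
      = (List.zipWith (fun i t => (i + 1) * t) (List.range T.length) T).sum := rfl
  rw [this, sum_zipWith_succ_mul, List.length_range, List.take_length]
  omega

/-- Chebyshev-type bound: for a list sorted in decreasing order,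
`2 Σ i·Lᵢ + Σ L ≤ |L| · Σ L`. -/
private lemma cheb : ∀ (L : List ℕ), L.Pairwise (· ≥ ·) →
    2 * (List.zipWith (· * ·) (List.range L.length) L).sum + L.sum ≤ L.length * L.sum
  | [], _ => by simp
  | a :: T, h => by
    have ha : ∀ x ∈ T, x ≤ a := fun x hx => (List.pairwise_cons.mp h).1 x hx
    have IH := cheb T (List.pairwise_cons.mp h).2
    have hsum : T.sum ≤ T.length * a := by simpa using List.sum_le_card_nsmul T a ha
    rw [S_cons, List.sum_cons, List.length_cons]
    nlinarith [IH, hsum]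

private lemma sum_ite_lt (m a : ℕ) (ha : a ≤ m) :
    (∑ k ∈ Finset.range m, if k + 1 ≤ a then 1 else 0) = a := by
  rw [Finset.sum_boole]
  have : (Finset.range m).filter (fun k => k + 1 ≤ a) = Finset.range a := by
    ext k; simp; omega
  rw [this]; simp

private lemma sum_conj (m : ℕ) (s : Multiset ℕ) (hs : ∀ p ∈ s, p ≤ m) :
    (∑ k ∈ Finset.range m, Multiset.card (s.filter (fun p => k + 1 ≤ p))) = s.sum := by
  induction s using Multiset.induction with
  | empty => simp
  | cons a s IH =>
    have ha : a ≤ m := hs a (Multiset.mem_cons_self a s)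
    have hcard : ∀ k, Multiset.card ((a ::ₘ s).filter (fun p => k + 1 ≤ p))
        = (if k + 1 ≤ a then 1 else 0) + Multiset.card (s.filter (fun p => k + 1 ≤ p)) := by
      intro k
      by_cases h : k + 1 ≤ a
      · rw [Multiset.filter_cons_of_pos _ h]; simp [h]; exact Nat.add_comm _ 1
      · rw [Multiset.filter_cons_of_neg _ h]; simp [h]
    simp only [hcard]
    rw [Finset.sum_add_distrib, sum_ite_lt m a ha,
      IH (fun p hp => hs p (Multiset.mem_cons_of_mem hp)), Multiset.sum_cons]

private lemma conj_sorted (m : ℕ) (s : Multiset ℕ) :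
    ((List.range m).map
      (fun k => Multiset.card (s.filter (fun p => k + 1 ≤ p)))).Pairwise (· ≥ ·) := by
  rw [List.pairwise_map]
  refine (List.pairwise_lt_range (n := m)).imp ?_
  intro i j hij
  exact Multiset.card_le_card (Multiset.monotone_filter_right s (fun p hp => by omega))

/-- If `λ ⊢ n` has at least two parts, smallest part `≥ 2` and `λ_1 = λ_2`,
then `n(λ) + n(λ') ≤ n(n+1)/4`. -/
theorem nval_add_nvalConj_le (n : ℕ) (P : Nat.Partition n)
    (hmin : ∀ p ∈ P.parts, 2 ≤ p) (htop : 2 ≤ P.parts.count P.parts.sup) :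
    4 * (P.nval + P.nvalConj) ≤ n * (n + 1) := by
  set l : ℕ := Multiset.card P.parts with hl
  set m : ℕ := P.parts.sup with hm
  have hn : P.parts.sum = n := P.parts_sum
  -- facts about descParts
  have hds : P.descParts.Pairwise (· ≥ ·) := by
    rw [Nat.Partition.descParts, List.pairwise_reverse]
    exact (Multiset.pairwise_sort (r := (· ≤ ·)) (s := P.parts)).imp (fun h => h)
  have hdsum : P.descParts.sum = n := by
    rw [Nat.Partition.descParts, List.sum_reverse, ← Multiset.sum_coe, Multiset.sort_eq, hn]
  have hdlen : P.descParts.length = l := by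
    rw [Nat.Partition.descParts, List.length_reverse, Multiset.length_sort]
  have h1 : 2 * P.nval + n ≤ l * n := by
    have h := cheb P.descParts hds
    rw [hdsum] at h
    have hv : P.nval = (List.zipWith (· * ·) (List.range P.descParts.length) P.descParts).sum :=
      rfl
    rw [hv, ← hdlen]
    exact h
  -- facts about conjParts
  have hcs : P.conjParts.Pairwise (· ≥ ·) := conj_sorted m P.parts
  have hcsum : P.conjParts.sum = n := by
    have : P.conjParts.sum
        = ∑ k ∈ Finset.range m, Multiset.card (P.parts.filter (fun p => k + 1 ≤ p)) := rfl
    rw [this, sum_conj m P.parts (fun p hp => Multiset.le_sup hp), hn]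
  have hclen : P.conjParts.length = m := by
    rw [Nat.Partition.conjParts, List.length_map, List.length_range]
  have h2 : 2 * P.nvalConj + n ≤ m * n := by
    have h := cheb P.conjParts hcs
    rw [hcsum] at h
    have hv : P.nvalConj
        = (List.zipWith (· * ·) (List.range P.conjParts.length) P.conjParts).sum := rfl
    rw [hv, ← hclen]
    exact h
  -- the size bound 2l + 2m ≤ n + 4
  have hrep : Multiset.replicate 2 m ≤ P.parts := Multiset.le_count_iff_replicate_le.mp htop
  obtain ⟨t, ht⟩ := Multiset.le_iff_exists_add.mp hrep
  have htsum : Multiset.card t * 2 ≤ t.sum := by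
    have h2t : ∀ x ∈ t, 2 ≤ x := by
      intro x hx
      exact hmin x (by rw [ht, Multiset.mem_add]; exact Or.inr hx)
    have := Multiset.card_nsmul_le_sum h2t
    simp only [smul_eq_mul] at this
    omega
  have hcardt : l = 2 + Multiset.card t := by
    rw [hl, ht, Multiset.card_add, Multiset.card_replicate]
  have hsumt : n = 2 * m + t.sum := by
    rw [← hn, ht, Multiset.sum_add, Multiset.sum_replicate]; simp [Nat.two_mul]
  have h3 : 2 * l + 2 * m ≤ n + 4 := by omega
  -- combine
  nlinarith [h1, h2, Nat.mul_le_mul_right n h3, sq_nonneg n]
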